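/- Let I be a compact interval of ℝ, V, W normed vector spaces, and Φ : I × V → W continuous such that the partial Fréchet differential D_2Φ(t,x) with respect to the second variable exists for all (t,x) and D_2Φ : I × V → L(V,W) is continuous. Then the Nemytskii operator N_Φ : C^0(I,V) → C^0(I,W), N_Φ(v) := (t ↦ Φ(t, v(t))), is of class C^1, with DN_Φ(v)·δv = (t ↦ D_2Φ(t, v(t)) · δv(t)). -/

import Mathlib

set_option maxHeartbeats 1000000

/-- Differentiability of Nemytskii operators: if `Φ : I × V → W` is continuous on a
compact interval `I = [a,b]`, has a partial Fréchet differential `D₂Φ` in the second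
variable everywhere, and `D₂Φ` is continuous, then `N_Φ : C^0(I,V) → C^0(I,W)`,
`N_Φ(v) = (t ↦ Φ(t, v(t)))`, is of class `C¹` with
`DN_Φ(v)·δv = (t ↦ D₂Φ(t, v(t))·δv(t))`. -/
theorem stmt_12 (a b : ℝ) (hab : a ≤ b) {V W : Type*}
    [NormedAddCommGroup V] [NormedSpace ℝ V] [NormedAddCommGroup W] [NormedSpace ℝ W]
    (Φ : Set.Icc a b × V → W) (hΦ : Continuous Φ)
    (D : Set.Icc a b → V → (V →L[ℝ] W))
    (hD : ∀ (t : Set.Icc a b) (x : V), HasFDerivAt (fun y => Φ (t, y)) (D t x) x)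
    (hDc : Continuous fun p : Set.Icc a b × V => D p.1 p.2) :
    ∃ DN : C(Set.Icc a b, V) → (C(Set.Icc a b, V) →L[ℝ] C(Set.Icc a b, W)),
      (∀ v : C(Set.Icc a b, V),
        HasFDerivAt
          (fun u : C(Set.Icc a b, V) =>
            (⟨fun t => Φ (t, u t),
              hΦ.comp (continuous_id.prodMk u.continuous)⟩ : C(Set.Icc a b, W)))
          (DN v) v) ∧
      Continuous DN ∧
      ∀ (v δv : C(Set.Icc a b, V)) (t : Set.Icc a b), DN v δv t = D t (v t) (δv t) := by
  classical
  -- continuity of t ↦ D t (v t)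
  have hDv : ∀ v : C(Set.Icc a b, V), Continuous fun t : Set.Icc a b => D t (v t) := fun v =>
    hDc.comp (continuous_id.prodMk v.continuous)
  have happly : ∀ v δv : C(Set.Icc a b, V), Continuous fun t : Set.Icc a b => D t (v t) (δv t) := fun v δv =>
    (hDv v).clm_apply δv.continuous
  -- the candidate derivative
  let L : C(Set.Icc a b, V) → (C(Set.Icc a b, V) →L[ℝ] C(Set.Icc a b, W)) := fun v =>
    LinearMap.mkContinuousOfExistsBound
      { toFun := fun δv => ⟨fun t => D t (v t) (δv t), happly v δv⟩
        map_add' := by intro x y; ext t; simp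
        map_smul' := by intro c x; ext t; simp }
      (by
        set M := ‖(⟨fun t => ‖D t (v t)‖, (hDv v).norm⟩ : C(Set.Icc a b, ℝ))‖ with hM
        have hMnn : 0 ≤ M := norm_nonneg _
        have hMb : ∀ t : Set.Icc a b, ‖D t (v t)‖ ≤ M := by
          intro t
          have := ContinuousMap.norm_coe_le_norm
            (⟨fun t => ‖D t (v t)‖, (hDv v).norm⟩ : C(Set.Icc a b, ℝ)) t
          simpa [Real.norm_eq_abs, abs_of_nonneg (norm_nonneg _)] using this
        refine ⟨M, fun δv => ?_⟩
        rw [ContinuousMap.norm_le _ (by positivity)]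
        intro t
        calc ‖D t (v t) (δv t)‖ ≤ ‖D t (v t)‖ * ‖δv t‖ := (D t (v t)).le_opNorm _
          _ ≤ M * ‖δv‖ := by
              gcongr
              · exact hMb t
              · exact δv.norm_coe_le_norm t)
  have hLapp : ∀ (v δv : C(Set.Icc a b, V)) (t : Set.Icc a b), L v δv t = D t (v t) (δv t) := fun v δv t => rfl
  -- uniform continuity near the graph of v
  have key : ∀ (v : C(Set.Icc a b, V)) (ε : ℝ), 0 < ε →
      ∃ δ > 0, ∀ (t : Set.Icc a b) (x : V), ‖x - v t‖ < δ → ‖D t x - D t (v t)‖ < ε := by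
    intro v ε hε
    have hK : IsCompact (Set.range fun t : Set.Icc a b => (t, v t)) :=
      isCompact_range (continuous_id.prodMk v.continuous)
    have hU : IsOpen {p : Set.Icc a b × V | ‖D p.1 p.2 - D p.1 (v p.1)‖ < ε} := by
      have hc : Continuous fun p : Set.Icc a b × V => ‖D p.1 p.2 - D p.1 (v p.1)‖ :=
        (hDc.sub (hDc.comp (continuous_fst.prodMk
          (v.continuous.comp continuous_fst)))).norm
      exact isOpen_lt hc continuous_const
    have hsub : (Set.range fun t : Set.Icc a b => (t, v t)) ⊆
        {p : Set.Icc a b × V | ‖D p.1 p.2 - D p.1 (v p.1)‖ < ε} := by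
      rintro _ ⟨t, rfl⟩; simpa using hε
    obtain ⟨δ, hδ, hth⟩ := hK.exists_thickening_subset_open hU hsub
    refine ⟨δ, hδ, fun t x hx => ?_⟩
    have hmem : (t, x) ∈ Metric.thickening δ (Set.range fun t : Set.Icc a b => (t, v t)) := by
      rw [Metric.mem_thickening_iff]
      refine ⟨(t, v t), ⟨t, rfl⟩, ?_⟩
      rw [Prod.dist_eq]
      exact max_lt (by simpa using hδ) (by simpa [dist_eq_norm] using hx)
    exact hth hmem
  -- distance on segments
  have hseg : ∀ (x y z : V), z ∈ segment ℝ x y → ‖z - x‖ ≤ ‖y - x‖ := by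
    rintro x y _ ⟨p, q, hp, hq, hpq, rfl⟩
    have : p • x + q • y - x = q • (y - x) := by
      have hp1 : p = 1 - q := by linarith
      rw [hp1]; module
    rw [this, norm_smul, Real.norm_eq_abs, abs_of_nonneg hq]
    nlinarith [norm_nonneg (y - x)]
  refine ⟨L, ?_, ?_, hLapp⟩
  · -- differentiability
    intro v
    rw [hasFDerivAt_iff_isLittleO_nhds_zero]
    rw [Asymptotics.isLittleO_iff]
    intro ε hε
    obtain ⟨δ, hδ, hkey⟩ := key v ε hε
    rw [Metric.eventually_nhds_iff]
    refine ⟨δ, hδ, fun h hh => ?_⟩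
    rw [dist_zero_right] at hh
    rw [ContinuousMap.norm_le _ (by positivity)]
    intro t
    have hht : ‖h t‖ ≤ ‖h‖ := h.norm_coe_le_norm t
    have hmvt : ‖Φ (t, v t + h t) - Φ (t, v t) - (D t (v t)) (v t + h t - v t)‖
        ≤ ε * ‖v t + h t - v t‖ := by
      refine Convex.norm_image_sub_le_of_norm_hasFDerivWithin_le'
        (f := fun y => Φ (t, y)) (f' := fun z => D t z) (φ := D t (v t))
        (s := segment ℝ (v t) (v t + h t))
        (fun z _ => (hD t z).hasFDerivWithinAt) ?_ (convex_segment _ _)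
        (left_mem_segment _ _ _) (right_mem_segment _ _ _)
      intro z hz
      have h1 : ‖z - v t‖ ≤ ‖v t + h t - v t‖ := hseg _ _ _ hz
      have h2 : ‖v t + h t - v t‖ = ‖h t‖ := by congr 1; abel
      exact le_of_lt (hkey t z (by rw [h2] at h1; exact lt_of_le_of_lt h1 (lt_of_le_of_lt hht hh)))
    have h2 : v t + h t - v t = h t := by abel
    rw [h2] at hmvt
    calc ‖((⟨fun t => Φ (t, (v + h) t), _⟩ : C(Set.Icc a b, W)) - ⟨fun t => Φ (t, v t), _⟩ - L v h) t‖
        = ‖Φ (t, v t + h t) - Φ (t, v t) - (D t (v t)) (h t)‖ := by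
          simp [hLapp]
      _ ≤ ε * ‖h t‖ := hmvt
      _ ≤ ε * ‖h‖ := by gcongr
  · -- continuity of L
    refine (Metric.continuous_iff (α := C(Set.Icc a b, V)) (β := C(Set.Icc a b, V) →L[ℝ] C(Set.Icc a b, W)) (f := L)).mpr ?_
    intro v ε hε
    obtain ⟨δ, hδ, hkey⟩ := key v (ε / 2) (by positivity)
    refine ⟨δ, hδ, fun u hu => ?_⟩
    rw [dist_eq_norm] at hu
    have hle : ‖L u - L v‖ ≤ ε / 2 := by
      refine ContinuousLinearMap.opNorm_le_bound _ (by positivity) fun δv => ?_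
      rw [ContinuousMap.norm_le _ (by positivity)]
      intro t
      have hut : ‖u t - v t‖ < δ := by
        calc ‖u t - v t‖ = ‖(u - v) t‖ := by simp
          _ ≤ ‖u - v‖ := (u - v).norm_coe_le_norm t
          _ < δ := hu
      have hd : ‖D t (u t) - D t (v t)‖ < ε / 2 := hkey t (u t) hut
      calc ‖((L u - L v) δv) t‖ = ‖(D t (u t) - D t (v t)) (δv t)‖ := by
            simp [hLapp]
        _ ≤ ‖D t (u t) - D t (v t)‖ * ‖δv t‖ := ContinuousLinearMap.le_opNorm _ _
        _ ≤ (ε / 2) * ‖δv‖ := by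
            gcongr <;> first
              | exact le_of_lt hd
              | exact δv.norm_coe_le_norm t
    calc dist (L u) (L v) = ‖L u - L v‖ := by exact dist_eq_norm (L u) (L v)
      _ ≤ ε / 2 := hle
      _ < ε := by linarith
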